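/- arXiv:2411.04080 — 2 statements merged into one kernel-verified Lean document; each statement's English description precedes it below -/
import Mathlib

section
/- Let N_A, N_B be positive integers, let H_A = (ℂ²)^{⊗N_A} and H_B = (ℂ²)^{⊗N_B}, let |Ψ⟩ be a unit vector in H_A ⊗ H_B, and let s be a nonempty subset of the qubits of H_B. With the concentratable entanglement C(·; s) as seed measure, L^{CE}(|Ψ⟩) ≤ L_global^{CE}(|Ψ⟩) ≤ C(|Ψ⟩; s). -/
open scoped BigOperators ComplexConjugate ComplexOrder

noncomputable section

namespace QIpaper

/-- Inner product `⟨ψ|φ⟩`, conjugate-linear in the first argument. -/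
def braket {I : Type*} [Fintype I] (ψ φ : I → ℂ) : ℂ := ∑ x, conj (ψ x) * φ x

/-- Outer product `|ψ⟩⟨ψ|`. -/
def dm {I : Type*} (ψ : I → ℂ) : Matrix I I ℂ := Matrix.of fun x y => ψ x * conj (ψ y)

open Classical in
/-- Positive semidefinite square root (junk value `0` on non-PSD matrices). -/
def psdSqrt {I : Type*} [Fintype I] [DecidableEq I] (A : Matrix I I ℂ) : Matrix I I ℂ :=
  if h : A.PosSemidef then (h.1.eigenvectorUnitary : Matrix I I ℂ) *
    Matrix.diagonal ((↑) ∘ Real.sqrt ∘ h.1.eigenvalues) * (star h.1.eigenvectorUnitary : Matrix I I ℂ)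
  else 0

/-- The trace norm `‖A‖₁ = tr √(AᴴA)`. -/
def traceNorm {I : Type*} [Fintype I] [DecidableEq I] (A : Matrix I I ℂ) : ℝ :=
  (psdSqrt (A.conjTranspose * A)).trace.re

/-- Fidelity `F(ρ,σ) = tr √(√ρ σ √ρ)`. -/
def fidelity {I : Type*} [Fintype I] [DecidableEq I] (ρ σ : Matrix I I ℂ) : ℝ :=
  (psdSqrt (psdSqrt ρ * σ * psdSqrt ρ)).trace.re

/-- Purity `tr(ρ²)`. -/
def purity {I : Type*} [Fintype I] (ρ : Matrix I I ℂ) : ℝ := ((ρ * ρ).trace).re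

def sigmaX : Matrix (Fin 2) (Fin 2) ℂ := !![0, 1; 1, 0]
def sigmaY : Matrix (Fin 2) (Fin 2) ℂ := !![0, -Complex.I; Complex.I, 0]
def sigmaZ : Matrix (Fin 2) (Fin 2) ℂ := !![1, 0; 0, -1]

/-- `σ_y^{⊗I}` on the qubits indexed by `I`. -/
def sigmaYn {I : Type*} [Fintype I] [DecidableEq I] : Matrix (I → Fin 2) (I → Fin 2) ℂ :=
  Matrix.of fun x y => ∏ k, sigmaY (x k) (y k)

/-- The `n`-tangle `τ(ψ) = |⟨ψ|σ_y^{⊗n}|ψ*⟩|`. -/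
def tangle {I : Type*} [Fintype I] [DecidableEq I] (ψ : (I → Fin 2) → ℂ) : ℝ :=
  ‖∑ x, ∑ y, conj (ψ x) * sigmaYn x y * conj (ψ y)‖

/-- Entrywise complex conjugate of a matrix. -/
def conjM {I J : Type*} (ρ : Matrix I J ℂ) : Matrix I J ℂ := Matrix.of fun x y => conj (ρ x y)

/-- `ρ̃ = σ_y^{⊗n} ρ* σ_y^{⊗n}`. -/
def tildeM {I : Type*} [Fintype I] [DecidableEq I] (ρ : Matrix (I → Fin 2) (I → Fin 2) ℂ) :
    Matrix (I → Fin 2) (I → Fin 2) ℂ := sigmaYn * conjM ρ * sigmaYn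

/-- The Wootters tilde `|ψ̃⟩ = σ_y^{⊗n}|ψ*⟩`. -/
def wtilde {I : Type*} [Fintype I] [DecidableEq I] (ψ : (I → Fin 2) → ℂ) : (I → Fin 2) → ℂ :=
  sigmaYn.mulVec (fun x => conj (ψ x))

/-- Reduced density matrix of the pure state `ψ` on the qubits in `s`
(tracing out the complement). -/
def reduced {n : ℕ} (s : Finset (Fin n)) (ψ : (Fin n → Fin 2) → ℂ) :
    Matrix ({i : Fin n // i ∈ s} → Fin 2) ({i : Fin n // i ∈ s} → Fin 2) ℂ :=
  Matrix.of fun a b => ∑ c : {i : Fin n // i ∉ s} → Fin 2,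
    ψ (fun i => if h : i ∈ s then a ⟨i, h⟩ else c ⟨i, h⟩) *
    conj (ψ (fun i => if h : i ∈ s then b ⟨i, h⟩ else c ⟨i, h⟩))

/-- GME-concurrence `C_GME(ψ) = min_{∅ ⊊ γ ⊊ [n]} √(2(1 − tr ψ_γ²))`. -/
def gme {n : ℕ} (ψ : (Fin n → Fin 2) → ℂ) : ℝ :=
  sInf {r : ℝ | ∃ γ : Finset (Fin n), γ ≠ ∅ ∧ γ ≠ Finset.univ ∧
    r = Real.sqrt (2 * (1 - purity (reduced γ ψ)))}

/-- Concentratable entanglement `C(ψ; s) = 1 − 2^{−|s|} Σ_{γ⊆s} tr(ψ_γ²)`. -/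
def CE {n : ℕ} (ψ : (Fin n → Fin 2) → ℂ) (s : Finset (Fin n)) : ℝ :=
  1 - (1 / 2 ^ s.card) * ∑ γ ∈ s.powerset, purity (reduced γ ψ)

/-- The subnormalized post-measurement vector `(⟨v|⊗I)|Ψ⟩`. -/
def contract {IA IB : Type*} [Fintype IA] (v : IA → ℂ) (Ψ : IA × IB → ℂ) : IB → ℂ :=
  fun y => ∑ x, conj (v x) * Ψ (x, y)

/-- Probability `p_v = ⟨Ψ|(|v⟩⟨v| ⊗ I)|Ψ⟩` of outcome `v`. -/
def prob {IA IB : Type*} [Fintype IA] [Fintype IB] (v : IA → ℂ) (Ψ : IA × IB → ℂ) : ℝ :=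
  (braket (contract v Ψ) (contract v Ψ)).re

/-- Normalized post-measurement state (the zero vector when the probability vanishes). -/
def postState {IA IB : Type*} [Fintype IA] [Fintype IB] (v : IA → ℂ) (Ψ : IA × IB → ℂ) :
    IB → ℂ := fun y => ((Real.sqrt (prob v Ψ) : ℂ))⁻¹ * contract v Ψ y

/-- `b` is an orthonormal family. (An orthonormal family indexed by the space's own
index type is an orthonormal basis.) -/
def ONB {J I : Type*} [Fintype I] [DecidableEq J] (b : J → I → ℂ) : Prop :=
  ∀ i j, braket (b i) (b j) = if i = j then 1 else 0

/-- Average post-measurement entanglement `Ē_β(Ψ) = Σ_i p_i E(φ_i)`. -/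
def avgE {ι IA IB : Type*} [Fintype ι] [Fintype IA] [Fintype IB]
    (E : (IB → ℂ) → ℝ) (b : ι → IA → ℂ) (Ψ : IA × IB → ℂ) : ℝ :=
  ∑ i, prob (b i) Ψ * E (postState (b i) Ψ)

/-- Multipartite entanglement of assistance: supremum of `Ē_β` over all
orthonormal bases `β` of `H_A`. -/
def Lglobal {IA IB : Type*} [Fintype IA] [Fintype IB] [DecidableEq IA]
    (E : (IB → ℂ) → ℝ) (Ψ : IA × IB → ℂ) : ℝ :=
  sSup {r : ℝ | ∃ b : IA → IA → ℂ, ONB b ∧ r = avgE E b Ψ}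

/-- Tensor-product basis of `(ℂ²)^{⊗K}` built from single-qubit bases. -/
def productBasis {K : Type*} [Fintype K] (q : K → Fin 2 → Fin 2 → ℂ) :
    (K → Fin 2) → (K → Fin 2) → ℂ :=
  fun i x => ∏ k, q k (i k) (x k)

/-- Localizable multipartite entanglement: supremum of `Ē_β` over product bases of
single-qubit orthonormal bases of `H_A = (ℂ²)^{⊗K}`. -/
def Lloc {K IB : Type*} [Fintype K] [DecidableEq K] [Fintype IB]
    (E : (IB → ℂ) → ℝ) (Ψ : (K → Fin 2) × IB → ℂ) : ℝ :=
  sSup {r : ℝ | ∃ q : K → Fin 2 → Fin 2 → ℂ, (∀ k, ONB (q k)) ∧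
    r = avgE E (productBasis q) Ψ}

/-- Partial trace over the `A` system of `|Ψ⟩⟨Ψ|`. -/
def ptraceA {IA IB : Type*} [Fintype IA] (Ψ : IA × IB → ℂ) : Matrix IB IB ℂ :=
  Matrix.of fun y y' => ∑ x, Ψ (x, y) * conj (Ψ (x, y'))

/-- Reduced density matrix of `|Ψ⟩⟨Ψ|` on the subset `s` of the `B` qubits. -/
def reducedB {IA : Type*} [Fintype IA] {n : ℕ} (s : Finset (Fin n))
    (Ψ : IA × (Fin n → Fin 2) → ℂ) :
    Matrix ({i : Fin n // i ∈ s} → Fin 2) ({i : Fin n // i ∈ s} → Fin 2) ℂ :=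
  Matrix.of fun a b => ∑ x : IA, ∑ c : {i : Fin n // i ∉ s} → Fin 2,
    Ψ (x, fun i => if h : i ∈ s then a ⟨i, h⟩ else c ⟨i, h⟩) *
    conj (Ψ (x, fun i => if h : i ∈ s then b ⟨i, h⟩ else c ⟨i, h⟩))


/-- Concentratable entanglement of a joint state `Ψ ∈ H_A ⊗ (ℂ²)^{⊗n}` with respect to a
subset `s` of the `B` qubits: `C(Ψ; s) = 1 − 2^{−|s|} Σ_{γ⊆s} tr(Ψ_γ²)`. -/
def CEjoint {IA : Type*} [Fintype IA] {n : ℕ} (Ψ : IA × (Fin n → Fin 2) → ℂ)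
    (s : Finset (Fin n)) : ℝ :=
  1 - (1 / 2 ^ s.card) * ∑ γ ∈ s.powerset, purity (reducedB γ Ψ)

lemma complete {I : Type*} [Fintype I] [DecidableEq I] (b : I → I → ℂ) (hb : ONB b)
    (x x' : I) : ∑ i, conj (b i x) * b i x' = if x = x' then 1 else 0 := by
  classical
  let A : Matrix I I ℂ := Matrix.of fun i x => b i x
  have h1 : A * A.conjTranspose = 1 := by
    ext i j
    simp only [Matrix.mul_apply, Matrix.conjTranspose_apply, Matrix.one_apply, A, Matrix.of_apply]
    have hij := hb i j
    simp only [braket] at hij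
    calc ∑ x, b i x * star (b j x) = conj (∑ x, conj (b i x) * b j x) := by
          simp [map_sum, mul_comm]
      _ = if i = j then 1 else 0 := by rw [hij]; split <;> simp
  have h2 : A.conjTranspose * A = 1 := mul_eq_one_comm.mp h1
  have h3 := congrFun (congrFun h2 x) x'
  simpa [Matrix.mul_apply, Matrix.conjTranspose_apply, Matrix.one_apply, A] using h3

lemma contract_sum {IA IB : Type*} [Fintype IA] [Fintype IB] [DecidableEq IA]
    (b : IA → IA → ℂ) (hb : ONB b) (Ψ : IA × IB → ℂ) (y y' : IB) :
    ∑ i, contract (b i) Ψ y * conj (contract (b i) Ψ y')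
      = ∑ x, Ψ (x, y) * conj (Ψ (x, y')) := by
  classical
  calc ∑ i, contract (b i) Ψ y * conj (contract (b i) Ψ y')
      = ∑ i, ∑ x, ∑ x', (conj (b i x) * b i x') * (Ψ (x, y) * conj (Ψ (x', y'))) := by
        simp only [contract, map_sum, map_mul, Complex.conj_conj, Finset.sum_mul,
          Finset.mul_sum]
        refine Finset.sum_congr rfl fun i _ => ?_
        rw [Finset.sum_comm]
        exact Finset.sum_congr rfl fun x _ => Finset.sum_congr rfl fun x' _ => by ring
    _ = ∑ x, ∑ x', (if x = x' then (1:ℂ) else 0) * (Ψ (x, y) * conj (Ψ (x', y'))) := by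
        rw [Finset.sum_comm]
        refine Finset.sum_congr rfl fun x _ => ?_
        rw [Finset.sum_comm]
        refine Finset.sum_congr rfl fun x' _ => ?_
        rw [← Finset.sum_mul, complete b hb x x']
    _ = ∑ x, Ψ (x, y) * conj (Ψ (x, y')) := by
        simp [ite_mul]

lemma purity_eq {I : Type*} [Fintype I] (ρ : Matrix I I ℂ)
    (h : ∀ a b, ρ b a = conj (ρ a b)) :
    purity ρ = ∑ a, ∑ b, Complex.normSq (ρ a b) := by
  simp only [purity, Matrix.trace, Matrix.diag, Matrix.mul_apply]
  rw [Complex.re_sum]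
  refine Finset.sum_congr rfl fun a _ => ?_
  rw [Complex.re_sum]
  refine Finset.sum_congr rfl fun b _ => ?_
  rw [h a b, Complex.mul_conj]
  simp

lemma reduced_herm {n : ℕ} (s : Finset (Fin n)) (ψ : (Fin n → Fin 2) → ℂ) (a b) :
    reduced s ψ b a = conj (reduced s ψ a b) := by
  simp only [reduced, Matrix.of_apply, map_sum, map_mul, Complex.conj_conj]
  exact Finset.sum_congr rfl fun c _ => by ring

lemma reducedB_herm {IA : Type*} [Fintype IA] {n : ℕ} (s : Finset (Fin n))
    (Ψ : IA × (Fin n → Fin 2) → ℂ) (a b) :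
    reducedB s Ψ b a = conj (reducedB s Ψ a b) := by
  simp only [reducedB, Matrix.of_apply, map_sum, map_mul, Complex.conj_conj]
  exact Finset.sum_congr rfl fun x _ => Finset.sum_congr rfl fun c _ => by ring

lemma reducedB_eq_sum {IA : Type*} [Fintype IA] [DecidableEq IA] {n : ℕ}
    (γ : Finset (Fin n)) (b : IA → IA → ℂ) (hb : ONB b)
    (Ψ : IA × (Fin n → Fin 2) → ℂ) :
    reducedB γ Ψ = ∑ i, reduced γ (contract (b i) Ψ) := by
  ext a a'
  rw [Matrix.sum_apply]
  simp only [reduced, reducedB, Matrix.of_apply]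
  rw [Finset.sum_comm]
  conv_rhs => rw [Finset.sum_comm]
  exact Finset.sum_congr rfl fun c _ => (contract_sum b hb Ψ _ _).symm

lemma braket_self_re {I : Type*} [Fintype I] (ψ : I → ℂ) :
    (braket ψ ψ).re = ∑ x, Complex.normSq (ψ x) := by
  simp only [braket, Complex.re_sum]
  refine Finset.sum_congr rfl fun x _ => ?_
  rw [← Complex.normSq_eq_conj_mul_self]
  simp

lemma prob_nonneg {IA IB : Type*} [Fintype IA] [Fintype IB] (v : IA → ℂ) (Ψ : IA × IB → ℂ) :
    0 ≤ prob v Ψ := by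
  rw [prob, braket_self_re]
  exact Finset.sum_nonneg fun x _ => Complex.normSq_nonneg _

lemma contract_eq_zero {IA IB : Type*} [Fintype IA] [Fintype IB] (v : IA → ℂ)
    (Ψ : IA × IB → ℂ) (h : prob v Ψ = 0) (y : IB) : contract v Ψ y = 0 := by
  rw [prob, braket_self_re] at h
  have := (Finset.sum_eq_zero_iff_of_nonneg (fun x _ => Complex.normSq_nonneg _)).mp h y
    (Finset.mem_univ y)
  exact Complex.normSq_eq_zero.mp this

lemma sum_prob {IA IB : Type*} [Fintype IA] [Fintype IB] [DecidableEq IA]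
    (b : IA → IA → ℂ) (hb : ONB b) (Ψ : IA × IB → ℂ) :
    ∑ i, prob (b i) Ψ = (braket Ψ Ψ).re := by
  calc ∑ i, prob (b i) Ψ = ∑ y, ∑ i, Complex.normSq (contract (b i) Ψ y) := by
        simp only [prob, braket_self_re]; rw [Finset.sum_comm]
    _ = ∑ y, ∑ x, Complex.normSq (Ψ (x, y)) := by
        refine Finset.sum_congr rfl fun y _ => ?_
        have h := congrArg Complex.re (contract_sum b hb Ψ y y)
        simpa [Complex.mul_conj, Complex.re_sum] using h
    _ = (braket Ψ Ψ).re := by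
        rw [braket_self_re, Fintype.sum_prod_type, Finset.sum_comm]

lemma eucl_norm_sq {ι : Type*} [Fintype ι] (x : EuclideanSpace ℂ ι) :
    ‖x‖ ^ 2 = ∑ i, Complex.normSq (x i) := by
  rw [EuclideanSpace.norm_eq, Real.sq_sqrt (by positivity)]
  simp [Complex.sq_norm]

lemma reduced_smul {n : ℕ} (γ : Finset (Fin n)) (c : ℂ) (ψ : (Fin n → Fin 2) → ℂ) (a b) :
    reduced γ (fun y => c * ψ y) a b = (c * conj c) * reduced γ ψ a b := by
  simp only [reduced, Matrix.of_apply, Finset.mul_sum, map_mul]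
  exact Finset.sum_congr rfl fun x _ => by ring

lemma purity_reduced_nonneg {n : ℕ} (γ : Finset (Fin n)) (ψ : (Fin n → Fin 2) → ℂ) :
    0 ≤ purity (reduced γ ψ) := by
  rw [purity_eq _ (reduced_herm γ ψ)]
  exact Finset.sum_nonneg fun a _ => Finset.sum_nonneg fun b _ => Complex.normSq_nonneg _

lemma purity_reduced_smul {n : ℕ} (γ : Finset (Fin n)) (c : ℂ) (ψ : (Fin n → Fin 2) → ℂ) :
    purity (reduced γ (fun y => c * ψ y)) = (Complex.normSq c) ^ 2 * purity (reduced γ ψ) := by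
  rw [purity_eq _ (reduced_herm γ _), purity_eq _ (reduced_herm γ ψ), Finset.mul_sum]
  refine Finset.sum_congr rfl fun a _ => ?_
  rw [Finset.mul_sum]
  refine Finset.sum_congr rfl fun b _ => ?_
  rw [reduced_smul, Complex.normSq_mul, Complex.normSq_mul, Complex.normSq_conj]
  ring

lemma sqrt_purity_factor {IA : Type*} [Fintype IA] {n : ℕ} (γ : Finset (Fin n))
    (v : IA → ℂ) (Ψ : IA × (Fin n → Fin 2) → ℂ) :
    Real.sqrt (purity (reduced γ (contract v Ψ)))
      = Real.sqrt (prob v Ψ) * Real.sqrt (prob v Ψ * purity (reduced γ (postState v Ψ))) := by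
  by_cases hp : prob v Ψ = 0
  · have hz : purity (reduced γ (contract v Ψ)) = 0 := by
      rw [purity_eq _ (reduced_herm γ _)]
      refine Finset.sum_eq_zero fun a _ => Finset.sum_eq_zero fun b _ => ?_
      simp [reduced, contract_eq_zero v Ψ hp]
    simp [hz, hp]
  · have hpp : (0:ℝ) ≤ prob v Ψ := prob_nonneg v Ψ
    have key : purity (reduced γ (postState v Ψ))
        = ((prob v Ψ)⁻¹) ^ 2 * purity (reduced γ (contract v Ψ)) := by
      have h := purity_reduced_smul γ ((Real.sqrt (prob v Ψ) : ℂ))⁻¹ (contract v Ψ)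
      have hps : postState v Ψ = fun y => ((Real.sqrt (prob v Ψ) : ℂ))⁻¹ * contract v Ψ y := rfl
      rw [hps, h]
      congr 2
      rw [Complex.normSq_inv, Complex.normSq_ofReal, Real.mul_self_sqrt hpp]
    rw [key, show prob v Ψ * (((prob v Ψ)⁻¹) ^ 2 * purity (reduced γ (contract v Ψ)))
        = (prob v Ψ)⁻¹ * purity (reduced γ (contract v Ψ)) from by field_simp,
      ← Real.sqrt_mul hpp]
    congr 1
    field_simp

lemma key_purity {IA : Type*} [Fintype IA] [DecidableEq IA] {n : ℕ} (γ : Finset (Fin n))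
    (b : IA → IA → ℂ) (hb : ONB b) (Ψ : IA × (Fin n → Fin 2) → ℂ)
    (hΨ : (braket Ψ Ψ).re = 1) :
    purity (reducedB γ Ψ) ≤
      ∑ i, prob (b i) Ψ * purity (reduced γ (postState (b i) Ψ)) := by
  classical
  set idx := ({i : Fin n // i ∈ γ} → Fin 2)
  let v : IA → EuclideanSpace ℂ (idx × idx) :=
    fun i => WithLp.toLp 2 (fun p : idx × idx => reduced γ (contract (b i) Ψ) p.1 p.2)
  have hsum : reducedB γ Ψ = ∑ i, reduced γ (contract (b i) Ψ) := reducedB_eq_sum γ b hb Ψ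
  have hVnorm : purity (reducedB γ Ψ) = ‖∑ i, v i‖ ^ 2 := by
    rw [purity_eq _ (reducedB_herm γ Ψ), eucl_norm_sq, Fintype.sum_prod_type]
    refine Finset.sum_congr rfl fun a _ => Finset.sum_congr rfl fun c _ => ?_
    congr 1
    rw [hsum, Matrix.sum_apply]
    rw [WithLp.ofLp_sum]
    exact (Finset.sum_apply (a, c) Finset.univ (fun i => (v i : idx × idx → ℂ))).symm
  have hvnorm : ∀ i, ‖v i‖ = Real.sqrt (purity (reduced γ (contract (b i) Ψ))) := by
    intro i
    have h2 : ‖v i‖ ^ 2 = purity (reduced γ (contract (b i) Ψ)) := by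
      rw [eucl_norm_sq, purity_eq _ (reduced_herm γ _), Fintype.sum_prod_type]
    rw [← h2, Real.sqrt_sq (norm_nonneg _)]
  have wnonneg : ∀ i, 0 ≤ prob (b i) Ψ * purity (reduced γ (postState (b i) Ψ)) :=
    fun i => mul_nonneg (prob_nonneg _ _) (purity_reduced_nonneg _ _)
  calc purity (reducedB γ Ψ) = ‖∑ i, v i‖ ^ 2 := hVnorm
    _ ≤ (∑ i, ‖v i‖) ^ 2 := by
        have := norm_sum_le Finset.univ v
        exact pow_le_pow_left₀ (norm_nonneg _) this 2
    _ = (∑ i, Real.sqrt (prob (b i) Ψ) *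
          Real.sqrt (prob (b i) Ψ * purity (reduced γ (postState (b i) Ψ)))) ^ 2 := by
        congr 1
        exact Finset.sum_congr rfl fun i _ => by rw [hvnorm i, sqrt_purity_factor]
    _ ≤ (Real.sqrt (∑ i, prob (b i) Ψ) *
          Real.sqrt (∑ i, prob (b i) Ψ * purity (reduced γ (postState (b i) Ψ)))) ^ 2 := by
        refine pow_le_pow_left₀ ?_ ?_ 2
        · exact Finset.sum_nonneg fun i _ =>
            mul_nonneg (Real.sqrt_nonneg _) (Real.sqrt_nonneg _)
        · exact Real.sum_sqrt_mul_sqrt_le _ (fun i => prob_nonneg _ _) wnonneg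
    _ = ∑ i, prob (b i) Ψ * purity (reduced γ (postState (b i) Ψ)) := by
        rw [mul_pow, Real.sq_sqrt (Finset.sum_nonneg fun i _ => prob_nonneg _ _),
          Real.sq_sqrt (Finset.sum_nonneg fun i _ => wnonneg i), sum_prob b hb Ψ, hΨ, one_mul]

lemma avg_le {IA : Type*} [Fintype IA] [DecidableEq IA] {n : ℕ} (s : Finset (Fin n))
    (b : IA → IA → ℂ) (hb : ONB b) (Ψ : IA × (Fin n → Fin 2) → ℂ)
    (hΨ : braket Ψ Ψ = 1) :
    avgE (fun φ => CE φ s) b Ψ ≤ CEjoint Ψ s := by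
  have hre : (braket Ψ Ψ).re = 1 := by rw [hΨ]; rfl
  have hp1 : ∑ i, prob (b i) Ψ = 1 := by rw [sum_prob b hb Ψ, hre]
  have expand : avgE (fun φ => CE φ s) b Ψ
      = 1 - (1 / 2 ^ s.card) * ∑ γ ∈ s.powerset, ∑ i,
          prob (b i) Ψ * purity (reduced γ (postState (b i) Ψ)) := by
    simp only [avgE, CE, mul_sub, mul_one]
    rw [Finset.sum_sub_distrib, hp1]
    congr 1
    simp_rw [Finset.mul_sum]
    rw [Finset.sum_comm]
    exact Finset.sum_congr rfl fun γ _ => Finset.sum_congr rfl fun i _ => by ring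
  rw [expand, CEjoint]
  have hmono : ∑ γ ∈ s.powerset, purity (reducedB γ Ψ)
      ≤ ∑ γ ∈ s.powerset, ∑ i, prob (b i) Ψ * purity (reduced γ (postState (b i) Ψ)) :=
    Finset.sum_le_sum fun γ _ => key_purity γ b hb Ψ hre
  have hc : (0:ℝ) ≤ 1 / 2 ^ s.card := by positivity
  linarith [mul_le_mul_of_nonneg_left hmono hc]

lemma std_onb {I : Type*} [Fintype I] [DecidableEq I] :
    ONB (fun (i : I) (x : I) => if i = x then (1:ℂ) else 0) := by
  intro i j
  simp only [braket, apply_ite (starRingEnd ℂ), map_one, map_zero, ite_mul, one_mul, zero_mul]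
  simp only [Finset.sum_ite_eq, Finset.mem_univ, if_true]
  by_cases h : i = j <;> simp [h, eq_comm]

lemma productBasis_onb {K : Type*} [Fintype K] [DecidableEq K]
    (q : K → Fin 2 → Fin 2 → ℂ) (hq : ∀ k, ONB (q k)) : ONB (productBasis q) := by
  intro i j
  calc braket (productBasis q i) (productBasis q j)
      = ∑ x : K → Fin 2, ∏ k, (conj (q k (i k) (x k)) * q k (j k) (x k)) := by
        simp only [braket, productBasis, map_prod]
        exact Finset.sum_congr rfl fun x _ => (Finset.prod_mul_distrib).symm
    _ = ∏ k, ∑ t, conj (q k (i k) t) * q k (j k) t := by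
        rw [Finset.prod_univ_sum, Fintype.piFinset_univ]
    _ = ∏ k, (if i k = j k then (1:ℂ) else 0) := by
        refine Finset.prod_congr rfl fun k _ => ?_
        simpa [braket] using hq k (i k) (j k)
    _ = if i = j then 1 else 0 := by
        by_cases h : i = j
        · simp [h]
        · obtain ⟨k, hk⟩ := Function.ne_iff.mp h
          rw [if_neg h]
          exact Finset.prod_eq_zero (Finset.mem_univ k) (if_neg hk)

/-- For a unit vector `Ψ` in `(ℂ²)^{⊗N_A} ⊗ (ℂ²)^{⊗N_B}` and a nonempty
subset `s` of the `B` qubits, the localizable multipartite entanglement and multipartite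
entanglement of assistance with the concentratable entanglement `C(·; s)` as seed measure
satisfy `L^{CE}(Ψ) ≤ L^{CE}_global(Ψ) ≤ C(Ψ; s)`. -/
theorem ce_localizable_le_assistance_le_ce
    (NA NB : ℕ) (hNA : 0 < NA) (hNB : 0 < NB)
    (s : Finset (Fin NB)) (hs : s.Nonempty)
    (Ψ : (Fin NA → Fin 2) × (Fin NB → Fin 2) → ℂ) (hΨ : braket Ψ Ψ = 1) :
    Lloc (fun φ => CE φ s) Ψ ≤ Lglobal (fun φ => CE φ s) Ψ ∧
    Lglobal (fun φ => CE φ s) Ψ ≤ CEjoint Ψ s := by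
  classical
  set E : ((Fin NB → Fin 2) → ℂ) → ℝ := fun φ => CE φ s with hE
  set Sg : Set ℝ := {r : ℝ | ∃ b : (Fin NA → Fin 2) → (Fin NA → Fin 2) → ℂ,
    ONB b ∧ r = avgE E b Ψ} with hSg
  set Sl : Set ℝ := {r : ℝ | ∃ q : Fin NA → Fin 2 → Fin 2 → ℂ, (∀ k, ONB (q k)) ∧
    r = avgE E (productBasis q) Ψ} with hSl
  have hbound : ∀ r ∈ Sg, r ≤ CEjoint Ψ s := by
    rintro r ⟨b, hb, rfl⟩
    exact avg_le s b hb Ψ hΨ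
  have hgne : Sg.Nonempty :=
    ⟨avgE E (fun i x => if i = x then (1:ℂ) else 0) Ψ, ⟨_, std_onb, rfl⟩⟩
  have hlne : Sl.Nonempty :=
    ⟨avgE E (productBasis (fun _ (i : Fin 2) (x : Fin 2) => if i = x then (1:ℂ) else 0)) Ψ,
      ⟨_, fun _ => std_onb, rfl⟩⟩
  have hsub : Sl ⊆ Sg := by
    rintro r ⟨q, hq, rfl⟩
    exact ⟨productBasis q, productBasis_onb q hq, rfl⟩
  constructor
  · exact csSup_le_csSup ⟨CEjoint Ψ s, hbound⟩ hlne hsub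
  · exact csSup_le hgne hbound

end QIpaper
end
end

section
/- For every unit vector |φ⟩ ∈ ℂ² ⊗ ℂ², the concentratable entanglement with respect to both qubits satisfies C(|φ⟩; {1,2}) = (1/2)(1 − tr(φ₁²)) = (1/4)·E(|φ⟩)², where φ₁ is the reduced density matrix of |φ⟩⟨φ| on the first qubit and E(|φ⟩) = |⟨φ|σ_y ⊗ σ_y|φ*⟩| is the two-qubit concurrence. -/
open scoped BigOperators ComplexConjugate ComplexOrder

noncomputable section

namespace QIpaper

/-! ### Auxiliary machinery for the two-qubit computation -/

section TwoQubitAux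

lemma sum_funUnique {α : Type*} [Unique α] (F : (α → Fin 2) → ℂ) :
    ∑ g, F g = F (fun _ => 0) + F (fun _ => 1) := by
  rw [← (Equiv.funUnique α (Fin 2)).symm.sum_comp, Fin.sum_univ_two]
  rfl

lemma sum_fin2fun (F : (Fin 2 → Fin 2) → ℂ) :
    ∑ g, F g = F ![0,0] + F ![0,1] + F ![1,0] + F ![1,1] := by
  rw [← ((piFinTwoEquiv fun _ => Fin 2)).symm.sum_comp, Fintype.sum_prod_type,
    Fin.sum_univ_two, Fin.sum_univ_two, Fin.sum_univ_two]
  have h : ∀ x y : Fin 2, (piFinTwoEquiv fun _ => Fin 2).symm (x, y) = ![x, y] := by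
    intro x y; funext i; fin_cases i <;> rfl
  rw [h 0 0, h 0 1, h 1 0, h 1 1]; ring

instance u0in : Unique {i : Fin 2 // i ∈ ({0} : Finset (Fin 2))} :=
  ⟨⟨⟨0, by decide⟩⟩, by decide⟩
instance u0out : Unique {i : Fin 2 // i ∉ ({0} : Finset (Fin 2))} :=
  ⟨⟨⟨1, by decide⟩⟩, by decide⟩
instance u1in : Unique {i : Fin 2 // i ∈ ({1} : Finset (Fin 2))} :=
  ⟨⟨⟨1, by decide⟩⟩, by decide⟩
instance u1out : Unique {i : Fin 2 // i ∉ ({1} : Finset (Fin 2))} :=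
  ⟨⟨⟨0, by decide⟩⟩, by decide⟩
instance ieEmpty : IsEmpty {i : Fin 2 // i ∈ (∅ : Finset (Fin 2))} :=
  ⟨fun j => Finset.notMem_empty j.1 j.2⟩
instance ieUnivC : IsEmpty {i : Fin 2 // i ∉ (Finset.univ : Finset (Fin 2))} :=
  ⟨fun j => j.2 (Finset.mem_univ _)⟩

/-- Equiv for functions out of a full subtype. -/
def eFull (p : Fin 2 → Prop) (hp : ∀ i, p i) :
    ({i : Fin 2 // p i} → Fin 2) ≃ (Fin 2 → Fin 2) :=
  Equiv.arrowCongr (Equiv.subtypeUnivEquiv hp) (Equiv.refl _)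

variable (φ : (Fin 2 → Fin 2) → ℂ)

lemma reduced_empty_entry (α β : ({i : Fin 2 // i ∈ (∅ : Finset (Fin 2))} → Fin 2)) :
    reduced (∅ : Finset (Fin 2)) φ α β = ∑ x : Fin 2 → Fin 2, φ x * conj (φ x) := by
  simp only [reduced, Matrix.of_apply]
  rw [← Equiv.sum_comp (eFull (fun i => i ∉ (∅ : Finset (Fin 2)))
    (fun i => Finset.notMem_empty i)).symm]
  refine Finset.sum_congr rfl fun x _ => ?_
  have h1 : ∀ γ : ({i : Fin 2 // i ∈ (∅ : Finset (Fin 2))} → Fin 2),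
      (fun i => if h : i ∈ (∅ : Finset (Fin 2)) then γ ⟨i, h⟩ else
      ((eFull _ (fun i => Finset.notMem_empty i)).symm x) ⟨i, h⟩) = x := by
    intro γ; funext i
    simp [eFull, Equiv.subtypeUnivEquiv]
  rw [h1 α, h1 β]

lemma reduced_univ_entry (α β : ({i : Fin 2 // i ∈ (Finset.univ : Finset (Fin 2))} → Fin 2)) :
    reduced (Finset.univ : Finset (Fin 2)) φ α β =
      φ (fun i => α ⟨i, Finset.mem_univ i⟩) * conj (φ (fun i => β ⟨i, Finset.mem_univ i⟩)) := by
  simp only [reduced, Matrix.of_apply]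
  rw [Fintype.sum_unique]
  refine congrArg₂ _ (congrArg φ ?_) (congrArg _ (congrArg φ ?_)) <;>
    · funext i; rw [dif_pos (Finset.mem_univ i)]

lemma purity_empty (hφ : braket φ φ = 1) :
    purity (reduced (∅ : Finset (Fin 2)) φ) = 1 := by
  have hent : ∀ α β, reduced (∅ : Finset (Fin 2)) φ α β = 1 := by
    intro α β
    rw [reduced_empty_entry]
    have : (∑ x : Fin 2 → Fin 2, φ x * conj (φ x)) = conj (braket φ φ) := by
      rw [braket, map_sum]
      exact Finset.sum_congr rfl fun x _ => by simp [mul_comm]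
    rw [this, hφ, map_one]
  simp [purity, Matrix.trace, Matrix.mul_apply, Fintype.sum_unique, hent]

lemma purity_univ (hφ : braket φ φ = 1) :
    purity (reduced (Finset.univ : Finset (Fin 2)) φ) = 1 := by
  have key : (∑ α : {i : Fin 2 // i ∈ (Finset.univ : Finset (Fin 2))} → Fin 2,
      φ (fun i => α ⟨i, Finset.mem_univ i⟩) * conj (φ (fun i => α ⟨i, Finset.mem_univ i⟩)))
      = 1 := by
    rw [← Equiv.sum_comp (eFull (fun i => i ∈ (Finset.univ : Finset (Fin 2)))
      (fun i => Finset.mem_univ i)).symm]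
    have h1 : ∀ x : Fin 2 → Fin 2,
        (fun i => ((eFull _ (fun i => Finset.mem_univ i)).symm x) ⟨i, Finset.mem_univ i⟩) = x := by
      intro x; funext i; simp [eFull, Equiv.subtypeUnivEquiv]
    have : (∑ x : Fin 2 → Fin 2, φ x * conj (φ x)) = conj (braket φ φ) := by
      rw [braket, map_sum]
      exact Finset.sum_congr rfl fun x _ => by simp [mul_comm]
    calc (∑ x : Fin 2 → Fin 2, _) = ∑ x : Fin 2 → Fin 2, φ x * conj (φ x) :=
          Finset.sum_congr rfl fun x _ => by rw [h1 x]
      _ = 1 := by rw [this, hφ, map_one]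
  have : ((reduced (Finset.univ : Finset (Fin 2)) φ *
      reduced (Finset.univ : Finset (Fin 2)) φ).trace) = 1 := by
    rw [Matrix.trace]
    simp only [Matrix.diag_apply, Matrix.mul_apply, reduced_univ_entry]
    rw [← Finset.sum_product']
    rw [show (1 : ℂ) = 1 * 1 by ring, ← key, Finset.sum_mul_sum, ← Finset.sum_product']
    exact Finset.sum_congr rfl fun p _ => by ring
  rw [purity, this, Complex.one_re]

lemma reduced_zero_entry (α β : ({i : Fin 2 // i ∈ ({0} : Finset (Fin 2))} → Fin 2)) :
    reduced ({0} : Finset (Fin 2)) φ α β =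
      φ ![α default, 0] * conj (φ ![β default, 0]) +
      φ ![α default, 1] * conj (φ ![β default, 1]) := by
  simp only [reduced, Matrix.of_apply]
  rw [← (Equiv.funUnique {i : Fin 2 // i ∉ ({0} : Finset (Fin 2))} (Fin 2)).symm.sum_comp,
    Fin.sum_univ_two]
  have h : ∀ (γ : {i : Fin 2 // i ∈ ({0} : Finset (Fin 2))} → Fin 2) (k : Fin 2),
      (fun i => if h : i ∈ ({0} : Finset (Fin 2)) then γ ⟨i, h⟩ else
        ((Equiv.funUnique {i : Fin 2 // i ∉ ({0} : Finset (Fin 2))} (Fin 2)).symm k) ⟨i, h⟩)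
        = ![γ default, k] := by
    intro γ k; funext i; fin_cases i <;> simp <;> rfl
  rw [h α 0, h β 0, h α 1, h β 1]

lemma reduced_one_entry (α β : ({i : Fin 2 // i ∈ ({1} : Finset (Fin 2))} → Fin 2)) :
    reduced ({1} : Finset (Fin 2)) φ α β =
      φ ![0, α default] * conj (φ ![0, β default]) +
      φ ![1, α default] * conj (φ ![1, β default]) := by
  simp only [reduced, Matrix.of_apply]
  rw [← (Equiv.funUnique {i : Fin 2 // i ∉ ({1} : Finset (Fin 2))} (Fin 2)).symm.sum_comp,
    Fin.sum_univ_two]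
  have h : ∀ (γ : {i : Fin 2 // i ∈ ({1} : Finset (Fin 2))} → Fin 2) (k : Fin 2),
      (fun i => if h : i ∈ ({1} : Finset (Fin 2)) then γ ⟨i, h⟩ else
        ((Equiv.funUnique {i : Fin 2 // i ∉ ({1} : Finset (Fin 2))} (Fin 2)).symm k) ⟨i, h⟩)
        = ![k, γ default] := by
    intro γ k; funext i; fin_cases i <;> simp <;> rfl
  rw [h α 0, h β 0, h α 1, h β 1]

/-- Named equivs (explicit instances, to avoid elaboration-order issues). -/
def euZero : ({i : Fin 2 // i ∈ ({0} : Finset (Fin 2))} → Fin 2) ≃ Fin 2 :=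
  @Equiv.funUnique _ _ u0in
def euOne : ({i : Fin 2 // i ∈ ({1} : Finset (Fin 2))} → Fin 2) ≃ Fin 2 :=
  @Equiv.funUnique _ _ u1in

lemma funUnique_symm_default {α : Type*} [Unique α] (k : Fin 2) :
    ((Equiv.funUnique α (Fin 2)).symm k) default = k := rfl

lemma trace_zero (φ : (Fin 2 → Fin 2) → ℂ) :
    ((reduced ({0} : Finset (Fin 2)) φ * reduced ({0} : Finset (Fin 2)) φ).trace) =
      (φ ![0,0] * conj (φ ![0,0]) + φ ![0,1] * conj (φ ![0,1])) *
        (φ ![0,0] * conj (φ ![0,0]) + φ ![0,1] * conj (φ ![0,1])) +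
      (φ ![0,0] * conj (φ ![1,0]) + φ ![0,1] * conj (φ ![1,1])) *
        (φ ![1,0] * conj (φ ![0,0]) + φ ![1,1] * conj (φ ![0,1])) +
      (φ ![1,0] * conj (φ ![0,0]) + φ ![1,1] * conj (φ ![0,1])) *
        (φ ![0,0] * conj (φ ![1,0]) + φ ![0,1] * conj (φ ![1,1])) +
      (φ ![1,0] * conj (φ ![1,0]) + φ ![1,1] * conj (φ ![1,1])) *
        (φ ![1,0] * conj (φ ![1,0]) + φ ![1,1] * conj (φ ![1,1])) := by
  simp only [Matrix.trace, Matrix.diag_apply, Matrix.mul_apply]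
  simp only [← Equiv.sum_comp euZero.symm, Fin.sum_univ_two]
  simp only [reduced_zero_entry, euZero, funUnique_symm_default]
  ring

lemma trace_one (φ : (Fin 2 → Fin 2) → ℂ) :
    ((reduced ({1} : Finset (Fin 2)) φ * reduced ({1} : Finset (Fin 2)) φ).trace) =
      (φ ![0,0] * conj (φ ![0,0]) + φ ![1,0] * conj (φ ![1,0])) *
        (φ ![0,0] * conj (φ ![0,0]) + φ ![1,0] * conj (φ ![1,0])) +
      (φ ![0,0] * conj (φ ![0,1]) + φ ![1,0] * conj (φ ![1,1])) *
        (φ ![0,1] * conj (φ ![0,0]) + φ ![1,1] * conj (φ ![1,0])) +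
      (φ ![0,1] * conj (φ ![0,0]) + φ ![1,1] * conj (φ ![1,0])) *
        (φ ![0,0] * conj (φ ![0,1]) + φ ![1,0] * conj (φ ![1,1])) +
      (φ ![0,1] * conj (φ ![0,1]) + φ ![1,1] * conj (φ ![1,1])) *
        (φ ![0,1] * conj (φ ![0,1]) + φ ![1,1] * conj (φ ![1,1])) := by
  simp only [Matrix.trace, Matrix.diag_apply, Matrix.mul_apply]
  simp only [← Equiv.sum_comp euOne.symm, Fin.sum_univ_two]
  simp only [reduced_one_entry, euOne, funUnique_symm_default]
  ring

end TwoQubitAux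

/-- For every two-qubit unit vector `φ`, the concentratable entanglement
with respect to both qubits satisfies
`C(φ; {1,2}) = (1/2)(1 − tr(φ₁²)) = (1/4)E(φ)²`, where `φ₁` is the reduced state on the
first qubit and `E` is the two-qubit concurrence `E(φ) = |⟨φ|σ_y⊗σ_y|φ*⟩|` (the 2-tangle). -/
theorem two_qubit_ce_eq_concurrence_sq
    (φ : (Fin 2 → Fin 2) → ℂ) (hφ : braket φ φ = 1) :
    CE φ Finset.univ = (1 / 2) * (1 - purity (reduced ({0} : Finset (Fin 2)) φ)) ∧
    CE φ Finset.univ = (1 / 4) * tangle φ ^ 2 := by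
  set a : ℂ := φ ![0,0] with ha
  set b : ℂ := φ ![0,1] with hb
  set c : ℂ := φ ![1,0] with hc
  set d : ℂ := φ ![1,1] with hd
  have hN : a * conj a + b * conj b + c * conj c + d * conj d = 1 := by
    have h := hφ
    rw [braket, sum_fin2fun] at h
    linear_combination h
  set r : ℝ := Complex.normSq (a * d - b * c) with hr
  have hconjD : conj (a * d - b * c) = conj a * conj d - conj b * conj c := by
    rw [map_sub, map_mul, map_mul]
  -- purity of the two single-qubit marginals
  have h0 : purity (reduced ({0} : Finset (Fin 2)) φ) = 1 - 2 * r := by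
    have ht : ((reduced ({0} : Finset (Fin 2)) φ * reduced ({0} : Finset (Fin 2)) φ).trace)
        = 1 - 2 * ((a * d - b * c) * conj (a * d - b * c)) := by
      rw [trace_zero, ← ha, ← hb, ← hc, ← hd, hconjD]
      linear_combination (a * conj a + b * conj b + c * conj c + d * conj d + 1) * hN
    rw [purity, ht, Complex.mul_conj, ← hr]
    simp
  have h1 : purity (reduced ({1} : Finset (Fin 2)) φ) = 1 - 2 * r := by
    have ht : ((reduced ({1} : Finset (Fin 2)) φ * reduced ({1} : Finset (Fin 2)) φ).trace)
        = 1 - 2 * ((a * d - b * c) * conj (a * d - b * c)) := by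
      rw [trace_one, ← ha, ← hb, ← hc, ← hd, hconjD]
      linear_combination (a * conj a + b * conj b + c * conj c + d * conj d + 1) * hN
    rw [purity, ht, Complex.mul_conj, ← hr]
    simp
  -- expand CE over the powerset of `univ`
  have hCE : CE φ Finset.univ = 1 - (1/4) *
      (purity (reduced (∅ : Finset (Fin 2)) φ) + purity (reduced ({0} : Finset (Fin 2)) φ) +
       purity (reduced ({1} : Finset (Fin 2)) φ) +
       purity (reduced (Finset.univ : Finset (Fin 2)) φ)) := by
    rw [CE]
    have hps : (Finset.univ : Finset (Fin 2)).powerset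
        = {∅, {0}, {1}, Finset.univ} := by decide
    rw [hps, Finset.sum_insert (by decide), Finset.sum_insert (by decide),
      Finset.sum_insert (by decide), Finset.sum_singleton]
    norm_num [Finset.card_univ]
    ring
  rw [hCE, purity_empty φ hφ, purity_univ φ hφ, h0, h1]
  -- the tangle
  have hS : (∑ x, ∑ y, conj (φ x) * sigmaYn x y * conj (φ y))
      = -2 * conj (a * d - b * c) := by
    simp only [sum_fin2fun, sigmaYn, Matrix.of_apply, Fin.prod_univ_two]
    rw [hconjD]
    simp only [sigmaY, ← ha, ← hb, ← hc, ← hd, Matrix.of_apply, Matrix.cons_val_zero,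
      Matrix.cons_val_one, Matrix.head_cons, Matrix.cons_val', Matrix.empty_val',
      Matrix.cons_val_fin_one, Matrix.head_fin_const]
    ring_nf
    simp only [Complex.I_sq]
    ring
  have htan : tangle φ ^ 2 = 4 * r := by
    rw [tangle, hS, Complex.sq_norm, map_mul, Complex.normSq_conj, ← hr]
    norm_num [Complex.normSq_apply]
  rw [htan]
  constructor <;> ring

end QIpaper
end
end
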